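/- For any K-simplex S and any d_0 ≥ 0, the sublevel set {x ∈ ℝ^K : d_S(x) ≤ d_0} of the planar distance is itself a K-simplex containing S, whose facets are parallel to those of S (each facet shifted outward by distance d_0 along its unit outward normal). -/

import Mathlib

set_option maxHeartbeats 1000000


/-- The planar distance of a point to a simplex: max{0, max_k (⟨w_k, x⟩ + b_k)}. -/
noncomputable def planarDist {K : ℕ} (w : Fin (K + 1) → EuclideanSpace ℝ (Fin K))
    (b : Fin (K + 1) → ℝ) (x : EuclideanSpace ℝ (Fin K)) : ℝ :=
  max 0 (Finset.univ.sup' Finset.univ_nonempty fun k => (inner ℝ (w k) x : ℝ) + b k)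

/-- A bounded set cannot contain a ray. -/
lemma no_ray_in_bounded {E : Type*} [NormedAddCommGroup E] [NormedSpace ℝ E]
    {S : Set E} (hb : Bornology.IsBounded S) {q v : E} (hv : v ≠ 0)
    (h : ∀ t : ℝ, 1 ≤ t → q + t • v ∈ S) : False := by
  obtain ⟨C, hC⟩ := isBounded_iff_forall_norm_le.mp hb
  have hvpos : 0 < ‖v‖ := norm_pos_iff.mpr hv
  set t : ℝ := max 1 ((C + ‖q‖ + 1) / ‖v‖) with ht
  have ht1 : 1 ≤ t := le_max_left _ _
  have h2 : (C + ‖q‖ + 1) / ‖v‖ ≤ t := le_max_right _ _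
  have h3 : C + ‖q‖ + 1 ≤ t * ‖v‖ := by
    rw [div_le_iff₀ hvpos] at h2; linarith
  have hmem := hC _ (h t ht1)
  have : ‖t • v‖ ≤ ‖q + t • v‖ + ‖q‖ := by
    have h5 := norm_sub_le (q + t • v) q
    rwa [add_sub_cancel_left] at h5
  have h4 : ‖t • v‖ = t * ‖v‖ := by
    rw [norm_smul, Real.norm_eq_abs, abs_of_pos (by linarith : (0:ℝ) < t)]
  nlinarith [norm_nonneg q]

/-- The sublevel set {x : d_S(x) ≤ d₀} of the planar distance is itself a K-simplex
containing S, whose facets are those of S shifted outward by d₀ along the unit normals. -/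
theorem planarDist_sublevel_is_simplex (K : ℕ)
    (w : Fin (K + 1) → EuclideanSpace ℝ (Fin K)) (b : Fin (K + 1) → ℝ)
    (hw : ∀ k, ‖w k‖ = 1)
    (S : Set (EuclideanSpace ℝ (Fin K)))
    (hS : S = {x | ∀ k, (inner ℝ (w k) x : ℝ) + b k ≤ 0})
    (hsimp : ∃ θ : Fin (K + 1) → EuclideanSpace ℝ (Fin K),
      AffineIndependent ℝ θ ∧ S = convexHull ℝ (Set.range θ))
    (hint : (interior S).Nonempty)
    (d0 : ℝ) (hd0 : 0 ≤ d0) :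
    {x | planarDist w b x ≤ d0} = {x | ∀ k, (inner ℝ (w k) x : ℝ) + (b k - d0) ≤ 0} ∧
    S ⊆ {x | planarDist w b x ≤ d0} ∧
    ∃ θ' : Fin (K + 1) → EuclideanSpace ℝ (Fin K),
      AffineIndependent ℝ θ' ∧
        {x | planarDist w b x ≤ d0} = convexHull ℝ (Set.range θ') := by
  classical
  obtain ⟨θ, hθind, hθhull⟩ := hsimp
  -- the sublevel set description
  have hdesc : {x | planarDist w b x ≤ d0}
      = {x | ∀ k, (inner ℝ (w k) x : ℝ) + (b k - d0) ≤ 0} := by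
    ext x
    simp only [Set.mem_setOf_eq, planarDist, max_le_iff, Finset.sup'_le_iff, Finset.mem_univ,
      true_implies]
    constructor
    · rintro ⟨-, h⟩ k; linarith [h k]
    · intro h
      exact ⟨hd0, fun k => by linarith [h k]⟩
  have hsub : S ⊆ {x | planarDist w b x ≤ d0} := by
    rw [hdesc]
    intro x hx
    rw [hS] at hx
    intro k
    have := hx k
    linarith
  refine ⟨hdesc, hsub, ?_⟩
  -- S is bounded
  have hbS : Bornology.IsBounded S := by
    rw [hθhull]
    exact ((Set.finite_range θ).isCompact_convexHull ℝ).isBounded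
  obtain ⟨p, hp⟩ := hint
  have hpS : p ∈ S := interior_subset hp
  have hpb : ∀ k, (inner ℝ (w k) p : ℝ) + b k ≤ 0 := by rw [hS] at hpS; exact hpS
  -- the linear map (c, r) ↦ (⟨w_j, c⟩ + r)_j is injective, hence surjective
  set L : (EuclideanSpace ℝ (Fin K) × ℝ) →ₗ[ℝ] (Fin (K + 1) → ℝ) :=
    LinearMap.pi (fun j =>
      ((innerSL ℝ (w j)).toLinearMap.comp (LinearMap.fst ℝ (EuclideanSpace ℝ (Fin K)) ℝ)) + LinearMap.snd ℝ (EuclideanSpace ℝ (Fin K)) ℝ) with hL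
  have hLapp : ∀ (c : EuclideanSpace ℝ (Fin K)) (r : ℝ) (j : Fin (K + 1)),
      L (c, r) j = (inner ℝ (w j) c : ℝ) + r := by
    intro c r j; rfl
  have hLinj : Function.Injective L := by
    rw [← LinearMap.ker_eq_bot, LinearMap.ker_eq_bot']
    rintro ⟨c, r⟩ hcr
    have hj : ∀ j, (inner ℝ (w j) c : ℝ) + r = 0 := by
      intro j
      have := congrFun hcr j
      simpa [hLapp] using this
    by_cases hc : c = 0
    · subst hc
      have := hj 0
      simp only [inner_zero_right, zero_add] at this
      simp [this]
    · exfalso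
      set v : EuclideanSpace ℝ (Fin K) := if 0 ≤ r then c else -c with hv
      have hvne : v ≠ 0 := by
        rw [hv]; split <;> simpa
      have hwv : ∀ j, (inner ℝ (w j) v : ℝ) ≤ 0 := by
        intro j
        have h1 : (inner ℝ (w j) c : ℝ) = -r := by linarith [hj j]
        rw [hv]
        split
        · rw [h1]; linarith
        · rw [inner_neg_right, h1]; push_neg at *; linarith
      refine no_ray_in_bounded hbS hvne (q := p) ?_
      intro t ht
      rw [hS]
      intro j
      show (inner ℝ (w j) (p + t • v) : ℝ) + b j ≤ 0
      have : (inner ℝ (w j) (p + t • v) : ℝ) = inner ℝ (w j) p + t * inner ℝ (w j) v := by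
        rw [inner_add_right, inner_smul_right]
      rw [this]
      have := hwv j
      nlinarith [hpb j]
  have hLsurj : Function.Surjective L := by
    have hfr : Module.finrank ℝ (EuclideanSpace ℝ (Fin K) × ℝ) = Module.finrank ℝ (Fin (K + 1) → ℝ) := by
      simp [Module.finrank_prod, finrank_euclideanSpace_fin]
    exact (LinearMap.injective_iff_surjective_of_finrank_eq_finrank hfr).mp hLinj
  obtain ⟨⟨c, r⟩, hcr⟩ := hLsurj (fun j => -b j)
  have hc : ∀ j, (inner ℝ (w j) c : ℝ) + b j = -r := by
    intro j
    have := congrFun hcr j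
    rw [hLapp] at this
    linarith
  -- interior ball gives strict margin
  obtain ⟨ε, hε, hball⟩ := Metric.isOpen_iff.mp isOpen_interior p hp
  have hmargin : ∀ j, (inner ℝ (w j) p : ℝ) + b j ≤ -(ε / 2) := by
    intro j
    have hmem : p + (ε / 2) • w j ∈ S := by
      apply interior_subset
      apply hball
      rw [Metric.mem_ball, dist_eq_norm]
      simp only [add_sub_cancel_left, norm_smul, Real.norm_eq_abs, hw j, mul_one,
        abs_of_pos (by linarith : (0:ℝ) < ε / 2)]
      linarith
    rw [hS] at hmem
    have := hmem j
    simp only [Set.mem_setOf_eq, inner_add_right, inner_smul_right,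
      real_inner_self_eq_norm_sq, hw j] at this
    nlinarith
  -- r > 0
  have hr : 0 < r := by
    by_contra hr
    push_neg at hr
    set v : EuclideanSpace ℝ (Fin K) := p - c with hv
    have hwv : ∀ j, (inner ℝ (w j) v : ℝ) ≤ -(ε / 2) + r := by
      intro j
      rw [hv, inner_sub_right]
      have := hmargin j
      have := hc j
      linarith
    have hvne : v ≠ 0 := by
      intro h
      have := hwv 0
      rw [h, inner_zero_right] at this
      linarith
    refine no_ray_in_bounded hbS hvne (q := c) ?_
    intro t ht
    rw [hS]
    intro j
    simp only [Set.mem_setOf_eq, inner_add_right, inner_smul_right]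
    have h1 := hwv j
    have h2 := hc j
    nlinarith
  -- the homothety
  set t : ℝ := (r + d0) / r with htdef
  have ht : 0 < t := div_pos (by linarith) hr
  set f : EuclideanSpace ℝ (Fin K) →ᵃ[ℝ] EuclideanSpace ℝ (Fin K) := AffineMap.homothety c t with hf
  have hfapp : ∀ y : EuclideanSpace ℝ (Fin K), f y = t • (y - c) + c := by
    intro y
    rw [hf, AffineMap.homothety_apply, vsub_eq_sub, vadd_eq_add]
  have htr : t * r = r + d0 := by
    rw [htdef]; field_simp
  -- key algebraic identity
  have hkey : ∀ (y : EuclideanSpace ℝ (Fin K)) (k : Fin (K + 1)),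
      (inner ℝ (w k) (f y) : ℝ) + b k - d0 = t * ((inner ℝ (w k) y : ℝ) + b k) := by
    intro y k
    rw [hfapp]
    have h1 : (inner ℝ (w k) (t • (y - c) + c) : ℝ)
        = t * (inner ℝ (w k) y : ℝ) - t * (inner ℝ (w k) c : ℝ) + (inner ℝ (w k) c : ℝ) := by
      rw [inner_add_right, inner_smul_right, inner_sub_right]; ring
    have h2 := hc k
    rw [h1]
    nlinarith
  -- the sublevel set is the image of S under f
  have himg : {x | planarDist w b x ≤ d0} = f '' S := by
    rw [hdesc]
    ext x
    constructor
    · intro hx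
      simp only [Set.mem_setOf_eq] at hx
      refine ⟨c + t⁻¹ • (x - c), ?_, ?_⟩
      · rw [hS]
        intro k
        have hfy : f (c + t⁻¹ • (x - c)) = x := by
          rw [hfapp]
          rw [add_sub_cancel_left, smul_smul, mul_inv_cancel₀ (ne_of_gt ht), one_smul]
          abel
        have := hkey (c + t⁻¹ • (x - c)) k
        rw [hfy] at this
        have hxk := hx k
        nlinarith
      · rw [hfapp, add_sub_cancel_left, smul_smul, mul_inv_cancel₀ (ne_of_gt ht), one_smul]
        abel
    · rintro ⟨y, hy, rfl⟩
      simp only [Set.mem_setOf_eq]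
      intro k
      rw [hS] at hy
      have := hkey y k
      have hyk := hy k
      nlinarith
  refine ⟨f ∘ θ, ?_, ?_⟩
  · apply hθind.map'
    intro a a' haa
    have h1 : f a = f a' := haa
    rw [hfapp, hfapp] at h1
    have h2 := add_right_cancel h1
    have h3 := smul_right_injective (EuclideanSpace ℝ (Fin K)) (ne_of_gt ht) h2
    exact sub_left_inj.mp h3
  · rw [himg, hθhull, AffineMap.image_convexHull, Set.range_comp]
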